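/- Let G be a group acting transitively on a set X. Suppose there exists a finitely additive probability measure m on the power set of G such that for all x, y ∈ X, the pushforward measures m·x and m·y on X coincide, where (m·x)(A) = m({g ∈ G : gx ∈ A}). Then for every ε > 0 and every finite subset F ⊆ X there exists a nonempty finite multiset (or finite sequence) E of elements of G such that |Ex Δ Ey| ≤ ε|E| for all x, y ∈ F, where Ex denotes the multiset {gx : g ∈ E} and Δ is symmetric difference counted with multiplicity. -/

import Mathlib

section mAux
variable {G : Type*} (m : Set G → ℝ)

lemma m_empty (hadd : ∀ A B : Set G, Disjoint A B → m (A ∪ B) = m A + m B) :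
    m ∅ = 0 := by
  have h := hadd ∅ ∅ (by simp)
  simp at h
  linarith

lemma m_biUnion (hadd : ∀ A B : Set G, Disjoint A B → m (A ∪ B) = m A + m B)
    {J : Type*} [DecidableEq J] (s : Finset J) (A : J → Set G)
    (hd : ∀ i ∈ s, ∀ j ∈ s, i ≠ j → Disjoint (A i) (A j)) :
    m (⋃ j ∈ s, A j) = ∑ j ∈ s, m (A j) := by
  classical
  induction s using Finset.induction_on with
  | empty => simpa using m_empty m hadd
  | @insert a s ha ih =>
    rw [Finset.sum_insert ha, Finset.set_biUnion_insert]
    rw [hadd _ _ ?_, ih ?_]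
    · intro i hi j hj hij
      exact hd i (Finset.mem_insert_of_mem hi) j (Finset.mem_insert_of_mem hj) hij
    · refine Set.disjoint_iUnion₂_right.mpr fun j hj => ?_
      exact hd a (Finset.mem_insert_self a s) j (Finset.mem_insert_of_mem hj)
        (by rintro rfl; exact ha hj)

lemma m_key {ι : Type*} [Fintype ι] [DecidableEq ι]
    (hm0 : ∀ A, 0 ≤ m A) (hm1 : m Set.univ = 1)
    (hadd : ∀ A B : Set G, Disjoint A B → m (A ∪ B) = m A + m B)
    (B : ι → Set G) (t : ι → ℝ) (u : ℝ)
    (h : ∀ g : G, ∑ i, t i * (B i).indicator 1 g ≤ u) :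
    ∑ i, t i * m (B i) ≤ u := by
  classical
  set sg : G → ι → Bool := fun g i => decide (g ∈ B i) with hsg
  set A : (ι → Bool) → Set G := fun σ => {g | sg g = σ} with hA
  have hmemA : ∀ g, g ∈ A (sg g) := fun g => rfl
  have hdisj : ∀ σ τ : ι → Bool, σ ≠ τ → Disjoint (A σ) (A τ) := by
    intro σ τ hne
    rw [Set.disjoint_left]
    intro g hg hg'
    exact hne (hg ▸ hg')
  have hBeq : ∀ i : ι, B i = ⋃ σ ∈ Finset.univ.filter (fun σ : ι → Bool => σ i = true), A σ := by
    intro i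
    ext g
    simp only [Set.mem_iUnion, Finset.mem_filter, Finset.mem_univ, true_and]
    constructor
    · intro hg
      exact ⟨sg g, by simp [hsg, hg], hmemA g⟩
    · rintro ⟨σ, hσi, hgσ⟩
      have : sg g = σ := hgσ
      have := congrFun this i
      rw [hσi] at this
      simpa [hsg] using this
  have hmB : ∀ i : ι, m (B i) =
      ∑ σ ∈ Finset.univ.filter (fun σ : ι → Bool => σ i = true), m (A σ) := by
    intro i
    rw [hBeq i]
    exact m_biUnion m hadd _ _ (fun σ _ τ _ hne => hdisj σ τ hne)
  have huniv : m Set.univ = ∑ σ : ι → Bool, m (A σ) := by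
    have : (Set.univ : Set G) = ⋃ σ ∈ (Finset.univ : Finset (ι → Bool)), A σ := by
      ext g
      simp only [Set.mem_univ, true_iff, Set.mem_iUnion]
      exact ⟨sg g, Finset.mem_univ _, hmemA g⟩
    rw [this, m_biUnion m hadd _ _ (fun σ _ τ _ hne => hdisj σ τ hne)]
  calc ∑ i, t i * m (B i)
      = ∑ i, ∑ σ : ι → Bool, (if σ i = true then t i * m (A σ) else 0) := by
        refine Finset.sum_congr rfl fun i _ => ?_
        rw [hmB i, Finset.mul_sum, Finset.sum_filter]
    _ = ∑ σ : ι → Bool, m (A σ) * ∑ i, (if σ i = true then t i else 0) := by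
        rw [Finset.sum_comm]
        refine Finset.sum_congr rfl fun σ _ => ?_
        rw [Finset.mul_sum]
        refine Finset.sum_congr rfl fun i _ => ?_
        by_cases hσi : σ i = true <;> simp [hσi, mul_comm]
    _ ≤ ∑ σ : ι → Bool, m (A σ) * u := by
        refine Finset.sum_le_sum fun σ _ => ?_
        rcases Set.eq_empty_or_nonempty (A σ) with hAe | ⟨g, hg⟩
        · rw [hAe, m_empty m hadd]; simp
        · refine mul_le_mul_of_nonneg_left ?_ (hm0 _)
          have hc : ∑ i, (if σ i = true then t i else 0)
              = ∑ i, t i * (B i).indicator 1 g := by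
            refine Finset.sum_congr rfl fun i _ => ?_
            have : (g ∈ B i) ↔ σ i = true := by
              have : sg g = σ := hg
              rw [← this]
              simp [hsg]
            by_cases hgB : g ∈ B i
            · rw [if_pos (this.mp hgB), Set.indicator_of_mem hgB]; simp
            · rw [if_neg (fun hh => hgB (this.mpr hh)), Set.indicator_of_notMem hgB]; simp
          rw [hc]
          exact h g
    _ = u := by rw [← Finset.sum_mul, ← huniv, hm1, one_mul]

end mAux

lemma mycard_sum {β γ : Type*} (s : Finset β) (f : β → Multiset γ) :
    Multiset.card (∑ j ∈ s, f j) = ∑ j ∈ s, Multiset.card (f j) := by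
  classical
  induction s using Finset.induction_on with
  | empty => simp
  | @insert a s ha ih => rw [Finset.sum_insert ha, Finset.sum_insert ha, Multiset.card_add, ih]

lemma mymap_sum {β γ δ : Type*} (f : γ → δ) (s : Finset β) (M : β → Multiset γ) :
    (∑ j ∈ s, M j).map f = ∑ j ∈ s, (M j).map f := by
  classical
  induction s using Finset.induction_on with
  | empty => simp
  | @insert a s ha ih => rw [Finset.sum_insert ha, Finset.sum_insert ha, Multiset.map_add, ih]

lemma habs_nat (c d : ℕ) : ((c - d : ℕ) : ℝ) + ((d - c : ℕ) : ℝ) = |(c:ℝ) - (d:ℝ)| := by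
  rcases le_total c d with h | h
  · rw [Nat.sub_eq_zero_of_le h, Nat.cast_sub h]
    have : (c:ℝ) ≤ (d:ℝ) := by exact_mod_cast h
    rw [abs_of_nonpos (by linarith), Nat.cast_zero]
    ring
  · rw [Nat.sub_eq_zero_of_le h, Nat.cast_sub h]
    have : (d:ℝ) ≤ (c:ℝ) := by exact_mod_cast h
    rw [abs_of_nonneg (by linarith), Nat.cast_zero]
    ring

open scoped symmDiff ENNReal

/-- Multiset symmetric difference, counted with multiplicity. -/
def msymmDiff {α : Type*} [DecidableEq α] (s t : Multiset α) : Multiset α :=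
  (s - t) + (t - s)

set_option maxHeartbeats 2000000 in
theorem stmt1 {G X : Type*} [Group G] [MulAction G X] [DecidableEq X]
    [MulAction.IsPretransitive G X]
    (m : Set G → ℝ)
    (hm0 : ∀ A, 0 ≤ m A) (hm1 : m Set.univ = 1)
    (hadd : ∀ A B : Set G, Disjoint A B → m (A ∪ B) = m A + m B)
    (hinv : ∀ (x y : X) (A : Set X),
      m {g : G | g • x ∈ A} = m {g : G | g • y ∈ A}) :
    ∀ ε > (0 : ℝ), ∀ F : Finset X, ∃ E : Multiset G, E ≠ 0 ∧
      ∀ x ∈ F, ∀ y ∈ F,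
        ((msymmDiff (E.map (· • x)) (E.map (· • y))).card : ℝ) ≤ ε * E.card := by
  classical
  intro ε hε F
  let v : G → lp (fun _ : (↥F × ↥F) × X => ℝ) 1 := fun g =>
    ∑ q : ↥F × ↥F, (lp.single 1 (q, g • (q.1 : X)) (1:ℝ) - lp.single 1 (q, g • (q.2 : X)) 1)
  have hv : ∀ (g : G) (q : ↥F × ↥F) (a : X),
      (v g) (q, a) = (if a = g • (q.1 : X) then (1:ℝ) else 0)
        - (if a = g • (q.2 : X) then (1:ℝ) else 0) := by
    intro g q a
    have hvdef : v g = ∑ q' : ↥F × ↥F, (lp.single 1 (q', g • (q'.1 : X)) (1:ℝ)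
        - lp.single 1 (q', g • (q'.2 : X)) 1) := rfl
    rw [hvdef, lp.coeFn_sum, Finset.sum_apply]
    rw [Finset.sum_eq_single q]
    · simp only [lp.coeFn_sub, Pi.sub_apply]
      congr 1
      · by_cases h : a = g • (q.1 : X)
        · rw [if_pos h, h, lp.single_apply_self]
        · rw [if_neg h, lp.single_apply_ne]
          simp [h]
      · by_cases h : a = g • (q.2 : X)
        · rw [if_pos h, h, lp.single_apply_self]
        · rw [if_neg h, lp.single_apply_ne]
          simp [h]
    · intro q' _ hq'
      simp only [lp.coeFn_sub, Pi.sub_apply]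
      rw [lp.single_apply_ne, lp.single_apply_ne, sub_zero]
      · simp [hq'.symm]
      · simp [hq'.symm]
    · intro h; exact absurd (Finset.mem_univ q) h
  by_cases h0 : (0 : lp (fun _ : (↥F × ↥F) × X => ℝ) 1) ∈ closure (convexHull ℝ (Set.range v))
  · obtain ⟨w, hwhull, hwnorm⟩ : ∃ w ∈ convexHull ℝ (Set.range v), ‖w‖ < ε/2 := by
      obtain ⟨w, hw1, hw2⟩ := Metric.mem_closure_iff.mp h0 (ε/2) (by linarith)
      exact ⟨w, hw1, by rwa [dist_zero_left] at hw2⟩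
    rw [convexHull_eq] at hwhull
    obtain ⟨ι₀, t, wt, z, hwt0, hwt1, hz, hcm⟩ := hwhull
    rw [Finset.centerMass_eq_of_sum_1 _ _ hwt1] at hcm
    have hzg : ∀ j ∈ t, ∃ g : G, v g = z j := fun j hj => hz j hj
    set gz : ι₀ → G := fun j => if h : ∃ g : G, v g = z j then h.choose else 1 with hgz
    have hgzv : ∀ j ∈ t, v (gz j) = z j := by
      intro j hj
      simp only [hgz, dif_pos (hzg j hj)]
      exact (hzg j hj).choose_spec
    have hwcoord : ∀ (q : ↥F × ↥F) (a : X),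
        (w : ((↥F × ↥F) × X) → ℝ) (q, a) = ∑ j ∈ t, wt j *
          ((if a = gz j • (q.1:X) then (1:ℝ) else 0) - (if a = gz j • (q.2:X) then 1 else 0)) := by
      intro q a
      rw [← hcm, lp.coeFn_sum, Finset.sum_apply]
      refine Finset.sum_congr rfl fun j hj => ?_
      rw [lp.coeFn_smul, Pi.smul_apply, ← hgzv j hj, hv (gz j) q a, smul_eq_mul]
    obtain ⟨n, hn⟩ := exists_nat_gt (max ((t.card : ℝ) + 1) ((2 * t.card + ε * t.card) * 2 / ε))
    have hntc : (t.card : ℝ) + 1 < n := lt_of_le_of_lt (le_max_left _ _) hn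
    have hnε : (2 * t.card + ε * t.card) * 2 / ε < n := lt_of_le_of_lt (le_max_right _ _) hn
    have hnpos : (0:ℝ) < n := by
      have h0 : (0:ℝ) ≤ (t.card : ℝ) := Nat.cast_nonneg _
      linarith
    set k : ι₀ → ℕ := fun j => ⌊(n:ℝ) * wt j⌋₊ with hk
    have hkbd : ∀ j ∈ t, (n:ℝ) * wt j - 1 ≤ (k j : ℝ) ∧ (k j : ℝ) ≤ (n:ℝ) * wt j := by
      intro j hj
      constructor
      · exact le_of_lt (Nat.sub_one_lt_floor _)
      · exact Nat.floor_le (mul_nonneg (Nat.cast_nonneg n) (hwt0 j hj)) 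
    set E : Multiset G := ∑ j ∈ t, Multiset.replicate (k j) (gz j) with hE
    have hcardE : (Multiset.card E : ℝ) = ∑ j ∈ t, (k j : ℝ) := by
      rw [hE, mycard_sum]
      push_cast
      exact Finset.sum_congr rfl fun j _ => by rw [Multiset.card_replicate]
    have hclower : (n:ℝ) - t.card ≤ (Multiset.card E : ℝ) := by
      rw [hcardE]
      have : ∑ j ∈ t, ((n:ℝ) * wt j - 1) ≤ ∑ j ∈ t, (k j : ℝ) :=
        Finset.sum_le_sum fun j hj => (hkbd j hj).1
      rw [Finset.sum_sub_distrib, ← Finset.mul_sum, hwt1, Finset.sum_const, mul_one] at this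
      simpa using this
    have hEne : E ≠ 0 := by
      have hpos : (0:ℝ) < (Multiset.card E : ℝ) := by
        have h0 : (0:ℝ) ≤ (t.card : ℝ) := Nat.cast_nonneg _
        linarith
      rw [← Multiset.card_pos]
      exact_mod_cast hpos
    refine ⟨E, hEne, ?_⟩
    intro x hx y hy
    have hcntN : ∀ b a : X, (E.map (· • b)).count a = ∑ j ∈ t, (if gz j • b = a then k j else 0) := by
      intro b a
      rw [hE, mymap_sum, Multiset.count_sum']
      refine Finset.sum_congr rfl fun j hj => ?_
      rw [Multiset.map_replicate, Multiset.count_replicate]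
    have hcnt : ∀ b a : X, ((E.map (· • b)).count a : ℝ)
        = ∑ j ∈ t, (k j : ℝ) * (if a = gz j • b then 1 else 0) := by
      intro b a
      rw [hcntN b a]
      push_cast
      refine Finset.sum_congr rfl fun j _ => ?_
      by_cases h : gz j • b = a
      · rw [if_pos h, if_pos h.symm, mul_one]
      · rw [if_neg h, if_neg (fun hh => h hh.symm), mul_zero]
    set A₀ : Finset X := t.image (fun j => gz j • x) ∪ t.image (fun j => gz j • y) with hA₀
    have hmemx : ∀ j ∈ t, gz j • x ∈ A₀ := fun j hj =>
      Finset.mem_union_left _ (Finset.mem_image_of_mem _ hj)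
    have hmemy : ∀ j ∈ t, gz j • y ∈ A₀ := fun j hj =>
      Finset.mem_union_right _ (Finset.mem_image_of_mem _ hj)
    have hcnt0x : ∀ a, a ∉ A₀ → (E.map (· • x)).count a = 0 := by
      intro a ha
      rw [hcntN x a]
      refine Finset.sum_eq_zero fun j hj => ?_
      rw [if_neg]
      intro hh
      exact ha (hh ▸ hmemx j hj)
    have hcnt0y : ∀ a, a ∉ A₀ → (E.map (· • y)).count a = 0 := by
      intro a ha
      rw [hcntN y a]
      refine Finset.sum_eq_zero fun j hj => ?_
      rw [if_neg]
      intro hh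
      exact ha (hh ▸ hmemy j hj)
    have hcardsum : ∀ s : Multiset X, (∀ a, a ∉ A₀ → s.count a = 0) →
        Multiset.card s = ∑ a ∈ A₀, s.count a := by
      intro s hs
      rw [← Multiset.toFinset_sum_count_eq]
      refine Finset.sum_subset ?_ ?_
      · intro a ha
        by_contra hcon
        have h1 := hs a hcon
        have h2 : a ∈ s := Multiset.mem_toFinset.mp ha
        rw [← Multiset.count_pos] at h2
        omega
      · intro a _ ha
        exact Multiset.count_eq_zero_of_notMem (fun hh => ha (Multiset.mem_toFinset.mpr hh))
    have hmsd : ((msymmDiff (E.map (· • x)) (E.map (· • y))).card : ℝ)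
        = ∑ a ∈ A₀, |((E.map (· • x)).count a : ℝ) - ((E.map (· • y)).count a : ℝ)| := by
      rw [msymmDiff, Multiset.card_add]
      rw [hcardsum _ (fun a ha => by rw [Multiset.count_sub, hcnt0x a ha, hcnt0y a ha]),
          hcardsum _ (fun a ha => by rw [Multiset.count_sub, hcnt0x a ha, hcnt0y a ha])]
      push_cast
      rw [← Finset.sum_add_distrib]
      refine Finset.sum_congr rfl fun a _ => ?_
      rw [Multiset.count_sub, Multiset.count_sub]
      exact_mod_cast habs_nat _ _
    set q : ↥F × ↥F := (⟨x, hx⟩, ⟨y, hy⟩) with hq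
    have hwq : ∀ a : X, (w : ((↥F × ↥F) × X) → ℝ) (q, a) = ∑ j ∈ t, wt j *
        ((if a = gz j • x then (1:ℝ) else 0) - (if a = gz j • y then 1 else 0)) :=
      fun a => hwcoord q a
    set W : X → ℝ := fun a => |(w : ((↥F × ↥F) × X) → ℝ) (q, a)| with hW
    set R : X → ℝ := fun a => ∑ j ∈ t, |(k j : ℝ) - (n:ℝ) * wt j| *
      ((if a = gz j • x then (1:ℝ) else 0) + (if a = gz j • y then 1 else 0)) with hR
    have hper : ∀ a : X, |((E.map (· • x)).count a : ℝ) - ((E.map (· • y)).count a : ℝ)|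
        ≤ (n:ℝ) * W a + R a := by
      intro a
      have h1 : ((E.map (· • x)).count a : ℝ) - ((E.map (· • y)).count a : ℝ)
          = (n:ℝ) * ((w : ((↥F × ↥F) × X) → ℝ) (q, a))
            + ∑ j ∈ t, ((k j : ℝ) - (n:ℝ) * wt j) *
              ((if a = gz j • x then (1:ℝ) else 0) - (if a = gz j • y then 1 else 0)) := by
        rw [hcnt x a, hcnt y a, hwq a, Finset.mul_sum, ← Finset.sum_add_distrib,
          ← Finset.sum_sub_distrib]
        refine Finset.sum_congr rfl fun j _ => ?_
        ring
      rw [h1, hW, hR]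
      refine (abs_add_le _ _).trans ?_
      rw [abs_mul, abs_of_nonneg (le_of_lt hnpos)]
      gcongr
      refine (Finset.abs_sum_le_sum_abs _ _).trans ?_
      refine Finset.sum_le_sum fun j _ => ?_
      rw [abs_mul]
      refine mul_le_mul_of_nonneg_left ?_ (abs_nonneg _)
      split_ifs <;> simp
    have hsumw : ∑ a ∈ A₀, W a ≤ ‖w‖ := by
      rw [hW]
      have hinj : Set.InjOn (fun a : X => ((q, a) : (↥F × ↥F) × X)) A₀ := by
        intro a _ b _ hab
        simpa using hab
      have h := lp.sum_rpow_le_norm_rpow (by simp : (0:ℝ) < (1:ℝ≥0∞).toReal) w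
        (A₀.image (fun a : X => ((q, a) : (↥F × ↥F) × X)))
      rw [Finset.sum_image hinj] at h
      simpa [Real.norm_eq_abs] using h
    have herr : ∑ a ∈ A₀, R a ≤ 2 * t.card := by
      rw [hR, Finset.sum_comm]
      have hjb : ∀ j ∈ t, ∑ a ∈ A₀, |(k j : ℝ) - (n:ℝ) * wt j| *
          ((if a = gz j • x then (1:ℝ) else 0) + (if a = gz j • y then 1 else 0)) ≤ 2 := by
        intro j hj
        rw [← Finset.mul_sum]
        have hbd : |(k j : ℝ) - (n:ℝ) * wt j| ≤ 1 := by
          have := hkbd j hj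
          rw [abs_le]
          constructor <;> linarith [this.1, this.2]
        have hS : ∑ a ∈ A₀, ((if a = gz j • x then (1:ℝ) else 0)
            + (if a = gz j • y then 1 else 0)) ≤ 2 := by
          rw [Finset.sum_add_distrib, Finset.sum_ite_eq' A₀ (gz j • x) (fun _ => (1:ℝ)),
            Finset.sum_ite_eq' A₀ (gz j • y) (fun _ => (1:ℝ))]
          split_ifs <;> norm_num
        have hSnn : (0:ℝ) ≤ ∑ a ∈ A₀, ((if a = gz j • x then (1:ℝ) else 0)
            + (if a = gz j • y then 1 else 0)) := by
          refine Finset.sum_nonneg fun a _ => ?_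
          split_ifs <;> norm_num
        calc |(k j : ℝ) - (n:ℝ) * wt j| * _ ≤ 1 * 2 := mul_le_mul hbd hS hSnn zero_le_one
        _ = 2 := by ring
      refine (Finset.sum_le_sum hjb).trans ?_
      rw [Finset.sum_const, nsmul_eq_mul, mul_comm]
    have hmain : ((msymmDiff (E.map (· • x)) (E.map (· • y))).card : ℝ)
        ≤ (n:ℝ) * (ε/2) + 2 * t.card := by
      rw [hmsd]
      have hsum1 : ∑ a ∈ A₀, |((E.map (· • x)).count a : ℝ) - ((E.map (· • y)).count a : ℝ)|
          ≤ ∑ a ∈ A₀, ((n:ℝ) * W a + R a) := Finset.sum_le_sum fun a _ => hper a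
      have hsum2 : ∑ a ∈ A₀, ((n:ℝ) * W a + R a)
          = (n:ℝ) * (∑ a ∈ A₀, W a) + ∑ a ∈ A₀, R a := by
        rw [Finset.sum_add_distrib, Finset.mul_sum]
      have hW2 : (n:ℝ) * (∑ a ∈ A₀, W a) ≤ (n:ℝ) * (ε/2) :=
        mul_le_mul_of_nonneg_left (hsumw.trans (le_of_lt hwnorm)) (le_of_lt hnpos)
      linarith
    have hfinal : (n:ℝ) * (ε/2) + 2 * t.card ≤ ε * Multiset.card E := by
      have h1 : (2 * t.card + ε * t.card) * 2 / ε < n := hnε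
      have h2 : (2 * (t.card:ℝ) + ε * t.card) * 2 < n * ε := by
        rwa [div_lt_iff₀ hε] at h1
      have h3 : ε * ((n:ℝ) - t.card) ≤ ε * Multiset.card E :=
        mul_le_mul_of_nonneg_left hclower (le_of_lt hε)
      nlinarith
    exact hmain.trans hfinal
  · exfalso
    obtain ⟨f, u, hfu, hu0⟩ := geometric_hahn_banach_closed_point
      (convex_convexHull ℝ _).closure isClosed_closure h0
    rw [map_zero] at hu0
    set M := ‖f‖ with hM
    set φ : (↥F × ↥F) → X → ℝ := fun q a => f (lp.single 1 ((q, a) : (↥F × ↥F) × X) 1) with hφ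
    have hφM : ∀ q a, |φ q a| ≤ M := by
      intro q a
      have h1 := f.le_opNorm (lp.single 1 ((q,a) : (↥F × ↥F) × X) (1:ℝ))
      have h2 : ‖(lp.single 1 ((q,a) : (↥F × ↥F) × X) (1:ℝ) :
          lp (fun _ : (↥F × ↥F) × X => ℝ) 1)‖ = ‖(1:ℝ)‖ :=
        lp.norm_single (by simp) _ _
      rw [h2] at h1
      simpa [hφ, hM] using h1
    have hfv : ∀ g, f (v g) = ∑ q : ↥F × ↥F, (φ q (g • (q.1:X)) - φ q (g • (q.2:X))) := by
      intro g
      have hvdef : v g = ∑ q' : ↥F × ↥F, (lp.single 1 (q', g • (q'.1 : X)) (1:ℝ)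
          - lp.single 1 (q', g • (q'.2 : X)) 1) := rfl
      rw [hvdef, map_sum]
      exact Finset.sum_congr rfl fun q _ => by rw [map_sub]
    have hvg : ∀ g, f (v g) < u := fun g =>
      hfu _ (subset_closure (subset_convexHull ℝ _ (Set.mem_range_self g)))
    have hu : u < 0 := hu0
    set C : ℝ := (Fintype.card (↥F × ↥F) : ℝ) with hC
    obtain ⟨n, hn⟩ := exists_nat_gt (max 1 (C / (-u / 2)))
    have hn1 : (1:ℝ) < n := lt_of_le_of_lt (le_max_left _ _) hn
    have hnpos : (0:ℝ) < n := by linarith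
    have hnu : (n:ℝ) * u + C ≤ (n:ℝ) * (u/2) := by
      have h2 : C / (-u/2) < n := lt_of_le_of_lt (le_max_right _ _) hn
      have h3 : C < (n:ℝ) * (-u/2) := (div_lt_iff₀ (by linarith)).mp h2
      nlinarith
    set κ : (↥F × ↥F) → X → ℤ := fun q a => ⌊(n:ℝ) * φ q a⌋ with hκ
    set K : ℤ := ⌈(n:ℝ) * M⌉ + 1 with hK
    have hκmem : ∀ q a, κ q a ∈ Finset.Icc (-K) K := by
      intro q a
      have habs := abs_le.mp (hφM q a)
      rw [Finset.mem_Icc]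
      constructor
      · rw [Int.le_floor]
        push_cast [hK]
        have : (n:ℝ) * M ≤ (⌈(n:ℝ)*M⌉ : ℝ) := Int.le_ceil _
        nlinarith
      · have h1 : (n:ℝ) * φ q a ≤ (n:ℝ) * M := by nlinarith
        calc κ q a ≤ ⌊(n:ℝ) * M⌋ := Int.floor_le_floor h1
        _ ≤ ⌈(n:ℝ) * M⌉ := Int.floor_le_ceil _
        _ ≤ K := by rw [hK]; omega
    have hptw : ∀ g : G,
        ∑ q : ↥F × ↥F, (((κ q (g • (q.1:X))) : ℝ) - ((κ q (g • (q.2:X))) : ℝ))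
          ≤ (n:ℝ) * (u/2) := by
      intro g
      have step : ∀ q : ↥F × ↥F,
          ((κ q (g • (q.1:X))) : ℝ) - ((κ q (g • (q.2:X))) : ℝ)
            ≤ (n:ℝ) * (φ q (g • (q.1:X)) - φ q (g • (q.2:X))) + 1 := by
        intro q
        have h1 : ((κ q (g • (q.1:X))) : ℝ) ≤ (n:ℝ) * φ q (g • (q.1:X)) := Int.floor_le _
        have h2 : (n:ℝ) * φ q (g • (q.2:X)) - 1 < ((κ q (g • (q.2:X))) : ℝ) :=
          Int.sub_one_lt_floor _
        linarith
      calc ∑ q : ↥F × ↥F, (((κ q (g • (q.1:X))) : ℝ) - ((κ q (g • (q.2:X))) : ℝ))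
          ≤ ∑ q : ↥F × ↥F, ((n:ℝ) * (φ q (g • (q.1:X)) - φ q (g • (q.2:X))) + 1) :=
            Finset.sum_le_sum fun q _ => step q
        _ = (n:ℝ) * f (v g) + C := by
            rw [Finset.sum_add_distrib, ← Finset.mul_sum, ← hfv g]
            rw [Finset.sum_const, Finset.card_univ, nsmul_eq_mul, mul_one, hC]
        _ ≤ (n:ℝ) * u + C := by
            have := hvg g
            nlinarith
        _ ≤ (n:ℝ) * (u/2) := hnu
    set B : (↥F × ↥F) × ↥(Finset.Icc (-K) K) × Bool → Set G := fun i =>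
      if i.2.2 then {g : G | κ i.1 (g • (i.1.1 : X)) = (i.2.1 : ℤ)}
      else {g : G | κ i.1 (g • (i.1.2 : X)) = (i.2.1 : ℤ)} with hB
    set tt : (↥F × ↥F) × ↥(Finset.Icc (-K) K) × Bool → ℝ := fun i =>
      if i.2.2 then ((i.2.1 : ℤ) : ℝ) else -((i.2.1 : ℤ) : ℝ) with htt
    have hkey : ∑ i, tt i * m (B i) ≤ (n:ℝ) * (u/2) := by
      refine m_key m hm0 hm1 hadd B tt _ ?_
      intro g
      rw [Fintype.sum_prod_type]
      have hker : ∀ (q : ↥F × ↥F) (z : X),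
          ∑ k : ↥(Finset.Icc (-K) K), (((k:ℤ):ℝ) *
            ({g : G | κ q (g • z) = (k:ℤ)}).indicator 1 g) = ((κ q (g • z) : ℤ) : ℝ) := by
        intro q z
        rw [Finset.sum_coe_sort (Finset.Icc (-K) K) (fun k => ((k:ℤ):ℝ) *
          ({g : G | κ q (g • z) = (k:ℤ)}).indicator 1 g)]
        rw [Finset.sum_eq_single (κ q (g • z))]
        · rw [Set.indicator_of_mem (by exact rfl)]
          simp
        · intro k _ hk
          rw [Set.indicator_of_notMem (by simpa using (Ne.symm hk))]
          simp
        · intro hmem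
          exact absurd (hκmem q (g • z)) hmem
      have hqsum : ∀ q : ↥F × ↥F,
          (∑ j : ↥(Finset.Icc (-K) K) × Bool, tt (q, j) * (B (q, j)).indicator 1 g)
            = ((κ q (g • (q.1:X)) : ℤ) : ℝ) - ((κ q (g • (q.2:X)) : ℤ) : ℝ) := by
        intro q
        rw [Fintype.sum_prod_type]
        have : ∀ k : ↥(Finset.Icc (-K) K),
            (∑ b : Bool, tt (q, k, b) * (B (q, k, b)).indicator 1 g)
              = ((k:ℤ):ℝ) * ({g : G | κ q (g • (q.1:X)) = (k:ℤ)}).indicator 1 g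
                - ((k:ℤ):ℝ) * ({g : G | κ q (g • (q.2:X)) = (k:ℤ)}).indicator 1 g := by
          intro k
          rw [Fintype.sum_bool]
          simp only [htt, hB, if_true, if_false, Bool.false_eq_true]
          ring
        rw [Finset.sum_congr rfl (fun k _ => this k), Finset.sum_sub_distrib,
          hker q (q.1:X), hker q (q.2:X)]
      rw [Finset.sum_congr rfl (fun q _ => hqsum q)]
      exact hptw g
    have hzero : ∑ i, tt i * m (B i) = 0 := by
      rw [Fintype.sum_prod_type]
      rw [Finset.sum_eq_zero]
      intro q _
      rw [Fintype.sum_prod_type]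
      rw [Finset.sum_eq_zero]
      intro k _
      rw [Fintype.sum_bool]
      simp only [htt, hB, if_true, if_false, Bool.false_eq_true]
      have := hinv (q.1:X) (q.2:X) {a : X | κ q a = (k:ℤ)}
      have heq : m {g : G | κ q (g • (q.1:X)) = (k:ℤ)} = m {g : G | κ q (g • (q.2:X)) = (k:ℤ)} := this
      rw [heq]
      ring
    rw [hzero] at hkey
    nlinarith
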